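/- Let n ≥ 1, let 1 ≤ k ≤ n, and let ∂ be the unique ℤ-linear derivation on ℤ[x_1,…,x_n] with ∂(x_i) = x_i² for all i. Let ∇ = ∏_{i=1}^{k} ∏_{j=k+1}^{n} (x_j − x_i). Then ∂(∇) = ( (n−k)·(x_1 + ⋯ + x_k) + k·(x_{k+1} + ⋯ + x_n) )·∇. -/

import Mathlib

open MvPolynomial

lemma deriv_prod {A : Type*} [CommRing A] (D : Derivation ℤ A A) {ι : Type*}
    (s : Finset ι) (f g : ι → A) (h : ∀ i ∈ s, D (f i) = g i * f i) :
    D (∏ i ∈ s, f i) = (∑ i ∈ s, g i) * ∏ i ∈ s, f i := by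
  induction s using Finset.cons_induction with
  | empty => simp
  | cons a s ha ih =>
    rw [Finset.prod_cons, Finset.sum_cons, Derivation.leibniz,
      ih (fun i hi => h i (Finset.mem_cons.2 (Or.inr hi))),
      h a (Finset.mem_cons_self a s), smul_eq_mul, smul_eq_mul]
    ring

/-- For `1 ≤ k ≤ n`, the derivation `∂` on `ℤ[x_1,…,x_n]` with `∂(x_i) = x_i²`
satisfies `∂(∇) = ((n-k)·(x_1+⋯+x_k) + k·(x_{k+1}+⋯+x_n))·∇`, where
`∇ = ∏_{i ≤ k < j} (x_j - x_i)`. -/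
theorem nabla_derivation (n k : ℕ) (hn : 1 ≤ n) (hk1 : 1 ≤ k) (hk2 : k ≤ n)
    (D : Derivation ℤ (MvPolynomial (Fin n) ℤ) (MvPolynomial (Fin n) ℤ))
    (hD : ∀ i, D (X i) = X i ^ 2) :
    D (∏ i ∈ Finset.univ.filter (fun i : Fin n => (i : ℕ) < k),
        ∏ j ∈ Finset.univ.filter (fun j : Fin n => k ≤ (j : ℕ)), (X j - X i)) =
      ((n - k) • (∑ i ∈ Finset.univ.filter (fun i : Fin n => (i : ℕ) < k), X i) +
          k • (∑ j ∈ Finset.univ.filter (fun j : Fin n => k ≤ (j : ℕ)), X j)) *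
        ∏ i ∈ Finset.univ.filter (fun i : Fin n => (i : ℕ) < k),
          ∏ j ∈ Finset.univ.filter (fun j : Fin n => k ≤ (j : ℕ)), (X j - X i) := by
  set s := Finset.univ.filter (fun i : Fin n => (i : ℕ) < k) with hs
  set t := Finset.univ.filter (fun j : Fin n => k ≤ (j : ℕ)) with ht
  have hseq : s = Finset.map (Fin.castLEEmb hk2) Finset.univ := by
    ext i
    simp only [hs, Finset.mem_filter, Finset.mem_univ, true_and, Finset.mem_map,
      Fin.castLEEmb_apply]
    constructor
    · intro h
      exact ⟨⟨i, h⟩, by ext; simp⟩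
    · rintro ⟨j, rfl⟩
      exact j.2
  have hcs : s.card = k := by rw [hseq]; simp
  have hct : t.card = n - k := by
    have : t = sᶜ := by
      ext i; simp [hs, ht, not_lt]
    rw [this, Finset.card_compl, hcs]
    simp
  have key : ∀ p ∈ s ×ˢ t, D (X p.2 - X p.1) = (X p.2 + X p.1) * (X p.2 - X p.1) := by
    rintro ⟨i, j⟩ -
    simp only [map_sub, hD]
    ring
  rw [← Finset.prod_product']
  refine (deriv_prod D (s ×ˢ t) (fun p => X p.2 - X p.1) (fun p => X p.2 + X p.1) key).trans ?_
  rw [Finset.sum_product]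
  congr 1
  simp only [Finset.sum_add_distrib, Finset.sum_const, ← Finset.smul_sum, hcs, hct]
  rw [add_comm]
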